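/- Define F : ℝ → ℝ by F(x) = (1/√5) · exp(((1 − √5)/2)·x) · (1 + (exp(√5·x) − 1)·χ(−x)), where χ is the Heaviside function (χ(s) = 1 for s ≥ 0 and χ(s) = 0 for s < 0). Then for every n ∈ ℕ the function x ↦ F(x)·xⁿ/n! is Lebesgue-integrable on ℝ and ∫_ℝ F(x)·(xⁿ/n!) dx = fib(n+1), where fib is the Fibonacci sequence (fib 0 = 0, fib 1 = 1, fib(n+2) = fib(n+1) + fib(n)), so that fib(n+1) runs through 1, 1, 2, 3, 5, …. -/

import Mathlib

open MeasureTheory Real Set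

private lemma aux_exp_int (r : ℝ) (hr : 0 < r) (n : ℕ) :
    IntegrableOn (fun x : ℝ => Real.exp (-(r * x)) * x ^ n) (Ioi 0) ∧
    ∫ x in Ioi (0:ℝ), Real.exp (-(r * x)) * x ^ n = (n.factorial : ℝ) / r ^ (n + 1) := by
  constructor
  · have h := integrableOn_rpow_mul_exp_neg_mul_rpow (p := 1) (s := (n : ℝ)) (b := r)
      (lt_of_lt_of_le (by norm_num) (Nat.cast_nonneg n)) one_pos hr
    refine h.congr_fun (fun x hx => ?_) measurableSet_Ioi
    dsimp only
    rw [Real.rpow_one, Real.rpow_natCast, mul_comm, neg_mul]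
  · have h := Real.integral_rpow_mul_exp_neg_mul_Ioi (a := (n : ℝ) + 1)
      (by positivity) hr
    have h1 : ∀ t : ℝ, t ^ ((n : ℝ) + 1 - 1) = t ^ n := by
      intro t; rw [add_sub_cancel_right, Real.rpow_natCast]
    simp only [h1] at h
    rw [setIntegral_congr_fun measurableSet_Ioi
      (fun x _ => mul_comm (Real.exp (-(r * x))) (x ^ n)), h,
      Real.Gamma_nat_eq_factorial,
      show ((n : ℝ) + 1) = ((n + 1 : ℕ) : ℝ) by push_cast; ring,
      Real.rpow_natCast, div_pow, one_pow]
    ring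

private lemma aux_integrableOn_Iic_comp_neg {f : ℝ → ℝ}
    (h : IntegrableOn (fun x => f (-x)) (Ioi (0:ℝ))) : IntegrableOn f (Iic (0:ℝ)) := by
  have A : MeasurableEmbedding fun x : ℝ => -x :=
    (Homeomorph.neg ℝ).isClosedEmbedding.measurableEmbedding
  have hmap : (volume : Measure ℝ) = Measure.map (fun x : ℝ => -x) volume :=
    (Measure.map_neg_eq_self (volume : Measure ℝ)).symm
  rw [IntegrableOn, hmap, ← IntegrableOn, A.integrableOn_map_iff]
  have hpre : (fun x : ℝ => -x) ⁻¹' Iic 0 = Ici (0:ℝ) := by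
    ext x; simp [neg_le]
  rw [hpre]
  rw [integrableOn_Ici_iff_integrableOn_Ioi]
  exact h

/-- The kernel `F(x) = (1/√5)·e^{((1-√5)/2)x}·(1 + (e^{√5 x} − 1)·χ(−x))` (with `χ` the
Heaviside function) is an umbral functional for the Fibonacci numbers: for every `n`,
`x ↦ F(x)·xⁿ/n!` is Lebesgue integrable and `∫_ℝ F(x)·(xⁿ/n!) dx = fib (n+1)`. -/
theorem fibonacci_umbral_functional
    (χ : ℝ → ℝ) (hχ : ∀ s : ℝ, χ s = if 0 ≤ s then 1 else 0)
    (F : ℝ → ℝ)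
    (hF : ∀ x : ℝ, F x =
      (1 / Real.sqrt 5) * Real.exp (((1 - Real.sqrt 5) / 2) * x) *
        (1 + (Real.exp (Real.sqrt 5 * x) - 1) * χ (-x))) :
    ∀ n : ℕ,
      Integrable (fun x : ℝ => F x * (x ^ n / (n.factorial : ℝ))) ∧
      ∫ x : ℝ, F x * (x ^ n / (n.factorial : ℝ)) = (Nat.fib (n + 1) : ℝ) := by
  intro n
  have h5 : (0:ℝ) < Real.sqrt 5 := Real.sqrt_pos.mpr (by norm_num)
  set c : ℝ := 1 / Real.sqrt 5 with hc
  have hφ : (0:ℝ) < goldenRatio := goldenRatio_pos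
  have hψ : goldenConj < 0 := goldenConj_neg
  have hnψ : (0:ℝ) < -goldenConj := by linarith
  have hfac : (0:ℝ) < (n.factorial : ℝ) := by positivity
  -- pointwise descriptions
  have heq1 : ∀ x ∈ Iic (0:ℝ), F x * (x ^ n / (n.factorial : ℝ)) =
      (c / (n.factorial : ℝ)) * (Real.exp (goldenRatio * x) * x ^ n) := by
    intro x hx
    rw [hF, hχ]
    rw [if_pos (by simpa using hx)]
    have : (1 : ℝ) + (Real.exp (Real.sqrt 5 * x) - 1) * 1 = Real.exp (Real.sqrt 5 * x) := by ring
    rw [this]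
    have hsplit : Real.exp (goldenRatio * x)
        = Real.exp ((1 - Real.sqrt 5) / 2 * x) * Real.exp (Real.sqrt 5 * x) := by
      rw [← Real.exp_add]; congr 1; rw [goldenRatio]; ring
    rw [hsplit]
    ring
  have heq2 : ∀ x ∈ Ioi (0:ℝ), F x * (x ^ n / (n.factorial : ℝ)) =
      (c / (n.factorial : ℝ)) * (Real.exp (-(-goldenConj * x)) * x ^ n) := by
    intro x hx
    rw [hF, hχ]
    rw [if_neg (by simp only [Left.nonneg_neg_iff, not_le]; exact hx)]
    have harg : -(-goldenConj * x) = (1 - Real.sqrt 5) / 2 * x := by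
      rw [goldenConj]; ring
    rw [harg]
    ring
  -- integrability on each half
  have key1 := aux_exp_int goldenRatio hφ n
  have key2 := aux_exp_int (-goldenConj) hnψ n
  have hleft : IntegrableOn (fun x : ℝ => F x * (x ^ n / (n.factorial : ℝ))) (Iic 0) := by
    have : IntegrableOn
        (fun x : ℝ => (c / (n.factorial : ℝ)) * (Real.exp (goldenRatio * x) * x ^ n))
        (Iic (0:ℝ)) := by
      apply aux_integrableOn_Iic_comp_neg
      have : IntegrableOn
          (fun x : ℝ => ((c / (n.factorial : ℝ)) * (-1) ^ n) *
            (Real.exp (-(goldenRatio * x)) * x ^ n)) (Ioi (0:ℝ)) := key1.1.const_mul _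
      refine this.congr_fun (fun x _ => ?_) measurableSet_Ioi
      rw [neg_pow]
      ring
    exact this.congr_fun (fun x hx => (heq1 x hx).symm) measurableSet_Iic
  have hright : IntegrableOn (fun x : ℝ => F x * (x ^ n / (n.factorial : ℝ))) (Ioi 0) := by
    have : IntegrableOn
        (fun x : ℝ => (c / (n.factorial : ℝ)) * (Real.exp (-(-goldenConj * x)) * x ^ n))
        (Ioi (0:ℝ)) := key2.1.const_mul _
    exact this.congr_fun (fun x hx => (heq2 x hx).symm) measurableSet_Ioi
  have hInt : Integrable (fun x : ℝ => F x * (x ^ n / (n.factorial : ℝ))) := by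
    rw [← integrableOn_univ, ← Iic_union_Ioi (a := (0:ℝ))]
    exact hleft.union hright
  refine ⟨hInt, ?_⟩
  -- relations between golden ratio and conjugate
  have hmul : goldenRatio * goldenConj = -1 := goldenRatio_mul_goldenConj
  have hφne : goldenRatio ^ (n + 1) ≠ 0 := pow_ne_zero _ (ne_of_gt hφ)
  have hψne : (-goldenConj) ^ (n + 1) ≠ 0 := pow_ne_zero _ (ne_of_gt hnψ)
  -- left integral
  have hL : ∫ x in Iic (0:ℝ), F x * (x ^ n / (n.factorial : ℝ))
      = -(c * goldenConj ^ (n + 1)) := by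
    rw [setIntegral_congr_fun measurableSet_Iic heq1]
    have hsub : ∫ x in Iic (0:ℝ),
        (c / (n.factorial : ℝ)) * (Real.exp (goldenRatio * x) * x ^ n)
        = ∫ x in Ioi (0:ℝ),
          (c / (n.factorial : ℝ)) * (Real.exp (goldenRatio * (-x)) * (-x) ^ n) := by
      rw [integral_comp_neg_Ioi (0:ℝ)
        (fun x => (c / (n.factorial : ℝ)) * (Real.exp (goldenRatio * x) * x ^ n)), neg_zero]
    rw [hsub]
    have : ∀ x : ℝ, (c / (n.factorial : ℝ)) * (Real.exp (goldenRatio * (-x)) * (-x) ^ n)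
        = ((c / (n.factorial : ℝ)) * (-1) ^ n) * (Real.exp (-(goldenRatio * x)) * x ^ n) := by
      intro x
      rw [mul_neg, neg_pow]
      ring
    simp only [this]
    rw [MeasureTheory.integral_const_mul, key1.2]
    have hstep : c / (n.factorial : ℝ) * (-1) ^ n * ((n.factorial : ℝ) / goldenRatio ^ (n + 1))
        = c * ((-1) ^ n / goldenRatio ^ (n + 1)) := by
      field_simp
    rw [hstep]
    have hstep2 : ((-1:ℝ)) ^ n / goldenRatio ^ (n + 1) = -goldenConj ^ (n + 1) := by
      rw [div_eq_iff hφne, neg_mul, ← mul_pow, mul_comm goldenConj, hmul]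
      rw [pow_succ]
      ring
    rw [hstep2]
    ring
  -- right integral
  have hR : ∫ x in Ioi (0:ℝ), F x * (x ^ n / (n.factorial : ℝ))
      = c * goldenRatio ^ (n + 1) := by
    rw [setIntegral_congr_fun measurableSet_Ioi heq2]
    rw [MeasureTheory.integral_const_mul, key2.2]
    have hpow : goldenRatio ^ (n + 1) * (-goldenConj) ^ (n + 1) = 1 := by
      rw [← mul_pow, mul_neg, hmul, neg_neg, one_pow]
    have hstep : c / (n.factorial : ℝ) * ((n.factorial : ℝ) / (-goldenConj) ^ (n + 1))
        = c / (-goldenConj) ^ (n + 1) := by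
      rw [div_mul_div_comm, mul_comm c, mul_div_mul_left _ _ (ne_of_gt hfac)]
    rw [hstep, div_eq_iff hψne, mul_assoc, hpow, mul_one]
  -- combine
  have h5ne : Real.sqrt 5 ≠ 0 := ne_of_gt h5
  rw [← intervalIntegral.integral_Iic_add_Ioi hleft hright, hL, hR, Real.coe_fib_eq, hc]
  field_simp
  ring
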